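/- Let P be an indiscompositive graph property and let G ∈ P be a graph with vertices v₁,…,v_k. Then there exists a countably infinite graph X, with vertex set partitioned into copies G¹,G²,… each labelled v₁ⁱ,…,v_kⁱ, which is uniform for G — that is, (i) for each i, the map v_xⁱ ↦ v_x is an isomorphism from the subgraph of X induced on {v₁ⁱ,…,v_kⁱ} to G, and (ii) for all p < q, the map sending v_xᵖ ↦ v_x¹ and v_xq ↦ v_x² is an isomorphism from the subgraph of X induced on copies p and q to the subgraph of X induced on copies 1 and 2 — and such that every finite induced subgraph of X belongs to P. -/

import Mathlib

attribute [local instance] Classical.propDecidable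

open SimpleGraph

/-- A finite simple graph, bundled. -/
structure FGraph : Type 1 where
  V : Type
  [fin : Fintype V]
  graph : SimpleGraph V

attribute [instance] FGraph.fin

namespace FGraph

/-- `G.IsInduced H` : `G` is isomorphic to an induced subgraph of `H`. -/
def IsInduced (G H : FGraph) : Prop := Nonempty (G.graph ↪g H.graph)

/-- `G.IsSub H` : `G` is isomorphic to a subgraph of `H`. -/
def IsSub (G H : FGraph) : Prop := ∃ f : G.graph →g H.graph, Function.Injective f

/-- `G.Iso H` : `G` and `H` are isomorphic. -/
def Iso (G H : FGraph) : Prop := Nonempty (G.graph ≃g H.graph)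

/-- The induced subgraph of `G` on a set `s` of vertices. -/
noncomputable def induce (G : FGraph) (s : Set G.V) : FGraph := ⟨↥s, G.graph.induce s⟩

end FGraph

/-- A class of finite graphs. -/
abbrev GProp : Type 1 := FGraph → Prop

/-- A graph property: a nonempty isomorphism-closed class of finite graphs,
each having at least one vertex. -/
structure IsGProp (P : GProp) : Prop where
  nonempty : ∃ G, P G
  vertexNonempty : ∀ G, P G → Nonempty G.V
  isoClosed : ∀ G H, G.Iso H → P G → P H

namespace GProp

/-- The product `P ∘ Q` of two classes of graphs. -/
def prod (P Q : GProp) : GProp := fun G =>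
  Nonempty G.V ∧ ∃ s : Set G.V,
    (s.Nonempty → P (G.induce s)) ∧ ((sᶜ : Set G.V).Nonempty → Q (G.induce (sᶜ : Set G.V)))

/-- The product `∏ i, Ps i` of an indexed family of classes of graphs:
the vertex set is partitioned into the (possibly empty) preimages of a map
to the index set, and every nonempty part must induce a graph in the
corresponding class. -/
def iProd {I : Type*} (Ps : I → GProp) : GProp := fun G =>
  Nonempty G.V ∧ ∃ f : G.V → I,
    ∀ i, (f ⁻¹' {i}).Nonempty → Ps i (G.induce (f ⁻¹' {i}))

end GProp

/-- Closed under induced subgraphs with at least one vertex. -/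
def IndHereditary (P : GProp) : Prop :=
  ∀ G H : FGraph, P G → H.IsInduced G → Nonempty H.V → P H

/-- Closed under subgraphs with at least one vertex. -/
def Hereditary (P : GProp) : Prop :=
  ∀ G H : FGraph, P G → H.IsSub G → Nonempty H.V → P H

/-- Closed under induced supergraphs. -/
def GeqHereditary (P : GProp) : Prop :=
  ∀ G H : FGraph, P H → H.IsInduced G → P G


/-- `P` is indiscompositive (induced-hereditary disjoint compositive):
induced-hereditary, and any two members of `P` occur as vertex-disjoint
induced subgraphs of some member of `P`. -/
def Indiscompositive (P : GProp) : Prop :=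
  IndHereditary P ∧ ∀ G H, P G → P H → ∃ K, P K ∧
    ∃ (f : G.graph ↪g K.graph) (g : H.graph ↪g K.graph), ∀ a b, f a ≠ g b

namespace Stmt11Aux

variable {C : Type*} [Finite C]

lemma exists_infinite_fiber' {S : Set ℕ} (hS : S.Infinite) (f : ℕ → C) :
    ∃ c, {x ∈ S | f x = c}.Infinite := by
  by_contra h
  push_neg at h
  have hcov : S ⊆ ⋃ c : C, {x ∈ S | f x = c} := fun x hx =>
    Set.mem_iUnion.2 ⟨f x, hx, rfl⟩
  exact hS ((Set.finite_iUnion fun c => h c).subset hcov)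

/-- State for the infinite Ramsey construction. -/
structure RState (f : ℕ → ℕ → C) where
  a : ℕ
  c : C
  S : Set ℕ
  inf : S.Infinite
  hgt : ∀ x ∈ S, a < x
  hcol : ∀ x ∈ S, f a x = c

lemma rstep_ex (f : ℕ → ℕ → C) (st : RState f) :
    ∃ st' : RState f, st'.a ∈ st.S ∧ st'.S ⊆ st.S := by
  obtain ⟨a', ha'⟩ := st.inf.nonempty
  have hinf : {x ∈ st.S | a' < x}.Infinite := by
    refine (st.inf.diff (Set.finite_Iic a')).mono ?_
    intro x hx
    exact ⟨hx.1, lt_of_not_ge fun hle => hx.2 hle⟩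
  obtain ⟨c', hc'⟩ := exists_infinite_fiber' hinf (f a')
  exact ⟨⟨a', c', _, hc', fun x hx => hx.1.2, fun x hx => hx.2⟩,
    ha', fun x hx => hx.1.1⟩

lemma rstate_nonempty (f : ℕ → ℕ → C) : Nonempty (RState f) := by
  obtain ⟨c', hc'⟩ := exists_infinite_fiber' (Set.Ioi_infinite 0) (f 0)
  exact ⟨⟨0, c', _, hc', fun x hx => hx.1, fun x hx => hx.2⟩⟩

noncomputable def rseq (f : ℕ → ℕ → C) : ℕ → RState f
  | 0 => Classical.choice (rstate_nonempty f)
  | n + 1 => (rstep_ex f (rseq f n)).choose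

lemma rseq_mem (f : ℕ → ℕ → C) (n : ℕ) : (rseq f (n + 1)).a ∈ (rseq f n).S :=
  (rstep_ex f (rseq f n)).choose_spec.1

lemma rseq_sub (f : ℕ → ℕ → C) (n : ℕ) : (rseq f (n + 1)).S ⊆ (rseq f n).S :=
  (rstep_ex f (rseq f n)).choose_spec.2

lemma rseq_sub' (f : ℕ → ℕ → C) {m n : ℕ} (h : m ≤ n) :
    (rseq f n).S ⊆ (rseq f m).S := by
  induction n with
  | zero => simp_all
  | succ n ih =>
    rcases Nat.eq_or_lt_of_le h with rfl | h'
    · exact fun _ hx => hx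
    · exact fun x hx => ih (Nat.lt_succ_iff.mp h') (rseq_sub f n hx)

lemma rseq_mem' (f : ℕ → ℕ → C) {i j : ℕ} (h : i < j) :
    (rseq f j).a ∈ (rseq f i).S := by
  obtain ⟨n, rfl⟩ := Nat.exists_eq_add_of_lt h
  exact rseq_sub' f (Nat.le_add_right _ _) (rseq_mem f (i + n))

theorem ramsey_pairs (f : ℕ → ℕ → C) :
    ∃ (c : C) (t : ℕ → ℕ), StrictMono t ∧ ∀ i j, i < j → f (t i) (t j) = c := by
  obtain ⟨c, hc⟩ := Finite.exists_infinite_fiber (fun n => (rseq f n).c)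
  haveI : Infinite ((fun n => (rseq f n).c) ⁻¹' {c} : Set ℕ) := hc
  set e := Nat.orderEmbeddingOfSet ((fun n => (rseq f n).c) ⁻¹' {c})
  have he : ∀ i, (rseq f (e i)).c = c := by
    intro i
    have : e i ∈ ((fun n => (rseq f n).c) ⁻¹' {c}) := by
      rw [← Nat.orderEmbeddingOfSet_range ((fun n => (rseq f n).c) ⁻¹' {c})]
      exact ⟨i, rfl⟩
    exact this
  refine ⟨c, fun i => (rseq f (e i)).a, ?_, ?_⟩
  · intro i j hij
    exact (rseq f (e i)).hgt _ (rseq_mem' f (e.strictMono hij))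
  · intro i j hij
    rw [← he i]
    exact (rseq f (e i)).hcol _ (rseq_mem' f (e.strictMono hij))


lemma hered {P : GProp} (hind : IndHereditary P) {V W : Type} [Fintype V] [Fintype W]
    {A : SimpleGraph V} {B : SimpleGraph W} (hB : P ⟨W, B⟩) (e : A ↪g B)
    (hne : Nonempty V) : P ⟨V, A⟩ :=
  hind ⟨W, B⟩ ⟨V, A⟩ hB ⟨e⟩ hne

def box (k n : ℕ) : Finset (ℕ × Fin k) := Finset.range n ×ˢ Finset.univ

lemma mem_box {k n : ℕ} {u : ℕ × Fin k} : u ∈ box k n ↔ u.1 < n := by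
  simp [box, Finset.mem_product]

noncomputable def fgOn {k : ℕ} (Z : SimpleGraph (ℕ × Fin k)) (n : ℕ) : FGraph :=
  ⟨(↑(box k n) : Set (ℕ × Fin k)), Z.induce (↑(box k n) : Set (ℕ × Fin k))⟩

/-- State of the chain construction at stage `n`. -/
structure CState (P : GProp) {k : ℕ} (G : SimpleGraph (Fin k)) (n : ℕ) where
  Z : SimpleGraph (ℕ × Fin k)
  mem : P (fgOn Z (n + 1))
  diag : ∀ p, p ≤ n → ∀ x y, Z.Adj (p, x) (p, y) ↔ G.Adj x y

variable {P : GProp} {k : ℕ} {G : SimpleGraph (Fin k)}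

lemma box_nonempty (hk : Nonempty (Fin k)) (n : ℕ) :
    Nonempty (↑(box k (n + 1)) : Set (ℕ × Fin k)) := by
  obtain ⟨x⟩ := hk
  exact ⟨⟨(0, x), by simp [mem_box]⟩⟩

lemma cinit_ex (hind : IndHereditary P) (hG : P ⟨Fin k, G⟩) (hk : Nonempty (Fin k)) :
    Nonempty (CState P G 0) := by
  refine ⟨⟨⟨fun u v => u.1 = v.1 ∧ G.Adj u.2 v.2,
      ⟨fun u v h => ⟨h.1.symm, h.2.symm⟩⟩, ⟨fun u h => G.irrefl h.2⟩⟩, ?_, ?_⟩⟩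
  · refine hered hind hG ?_ (box_nonempty hk 0)
    refine ⟨⟨fun a => (a : ℕ × Fin k).2, ?_⟩, ?_⟩
    · intro a b hab
      have ha : (a : ℕ × Fin k).1 = 0 := Nat.lt_one_iff.mp (mem_box.mp a.2)
      have hb : (b : ℕ × Fin k).1 = 0 := Nat.lt_one_iff.mp (mem_box.mp b.2)
      exact Subtype.ext (Prod.ext (ha.trans hb.symm) hab)
    · intro a b
      simp only [Function.Embedding.coeFn_mk, comap_adj, Function.Embedding.coe_subtype]
      constructor
      · intro h
        have ha : (a : ℕ × Fin k).1 = 0 := Nat.lt_one_iff.mp (mem_box.mp a.2)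
        have hb : (b : ℕ × Fin k).1 = 0 := Nat.lt_one_iff.mp (mem_box.mp b.2)
        exact ⟨ha.trans hb.symm, h⟩
      · exact fun h => h.2
  · exact fun p _ x y => by
      constructor
      · exact fun h => h.2
      · exact fun h => ⟨rfl, h⟩

lemma cstep_ex (hind : Indiscompositive P) (hG : P ⟨Fin k, G⟩) (hk : Nonempty (Fin k))
    (n : ℕ) (st : CState P G n) :
    ∃ st' : CState P G (n + 1), ∀ u v : ℕ × Fin k, u.1 ≤ n → v.1 ≤ n →
      (st'.Z.Adj u v ↔ st.Z.Adj u v) := by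
  obtain ⟨K, hK, f, g, hfg⟩ := hind.2 (fgOn st.Z (n + 1)) ⟨Fin k, G⟩ st.mem hG
  set F : ℕ × Fin k → K.V :=
    fun u => if h : u ∈ box k (n + 1) then f ⟨u, h⟩ else g u.2 with hF
  have hFin : ∀ (u : ℕ × Fin k) (h : u ∈ box k (n + 1)), F u = f ⟨u, h⟩ :=
    fun u h => dif_pos h
  have hFout : ∀ u : ℕ × Fin k, ¬ u.1 < n + 1 → F u = g u.2 :=
    fun u h => dif_neg (fun hm => h (mem_box.mp hm))
  set Z' : SimpleGraph (ℕ × Fin k) :=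
    { Adj := fun u v => u ≠ v ∧ K.graph.Adj (F u) (F v)
      symm := ⟨fun u v h => ⟨h.1.symm, h.2.symm⟩⟩
      loopless := ⟨fun u h => h.1 rfl⟩ } with hZ'
  have hZadj : ∀ u v : ℕ × Fin k, Z'.Adj u v ↔ u ≠ v ∧ K.graph.Adj (F u) (F v) :=
    fun u v => Iff.rfl
  -- injectivity of F on box k (n+2)
  have hFinj : ∀ u v : ℕ × Fin k, u.1 < n + 2 → v.1 < n + 2 → F u = F v → u = v := by
    intro u v hu hv huv
    by_cases h1 : u ∈ box k (n + 1) <;> by_cases h2 : v ∈ box k (n + 1)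
    · rw [hFin u h1, hFin v h2] at huv
      exact congrArg Subtype.val (f.injective huv)
    · rw [hFin u h1, hFout v (fun h => h2 (mem_box.mpr h))] at huv
      exact absurd huv (hfg _ _)
    · rw [hFout u (fun h => h1 (mem_box.mpr h)), hFin v h2] at huv
      exact absurd huv.symm (hfg _ _)
    · have h1' : ¬ u.1 < n + 1 := fun h => h1 (mem_box.mpr h)
      have h2' : ¬ v.1 < n + 1 := fun h => h2 (mem_box.mpr h)
      rw [hFout u h1', hFout v h2'] at huv
      exact Prod.ext (by omega) (g.injective huv)
  -- agreement with st.Z on the old box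
  have hagree : ∀ u v : ℕ × Fin k, u.1 ≤ n → v.1 ≤ n → (Z'.Adj u v ↔ st.Z.Adj u v) := by
    intro u v hu hv
    have h1 : u ∈ box k (n + 1) := mem_box.mpr (by omega)
    have h2 : v ∈ box k (n + 1) := mem_box.mpr (by omega)
    rw [hZadj, hFin u h1, hFin v h2]
    have := f.map_rel_iff (a := ⟨u, h1⟩) (b := ⟨v, h2⟩)
    change K.graph.Adj (f ⟨u, h1⟩) (f ⟨v, h2⟩) ↔ st.Z.Adj u v at this
    rw [this]
    constructor
    · exact fun h => h.2
    · exact fun h => ⟨h.ne, h⟩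
  -- the new diagonal copy
  have hdiagnew : ∀ x y, Z'.Adj (n + 1, x) (n + 1, y) ↔ G.Adj x y := by
    intro x y
    rw [hZadj, hFout _ (by omega), hFout _ (by omega)]
    rw [g.map_rel_iff]
    constructor
    · exact fun h => h.2
    · intro h
      exact ⟨by simpa [Prod.ext_iff] using h.ne, h⟩
  refine ⟨⟨Z', ?_, ?_⟩, hagree⟩
  · refine hered hind.1 hK ?_ (box_nonempty hk (n + 1))
    refine ⟨⟨fun a => F a, ?_⟩, ?_⟩
    · intro a b hab
      exact Subtype.ext (hFinj _ _ (mem_box.mp a.2) (mem_box.mp b.2) hab)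
    · intro a b
      simp only [Function.Embedding.coeFn_mk, comap_adj, Function.Embedding.coe_subtype]
      constructor
      · intro h
        refine ⟨fun he => ?_, h⟩
        rw [Subtype.ext he] at h
        exact K.graph.irrefl h
      · exact fun h => h.2
  · intro p hp x y
    rcases Nat.lt_or_ge p (n + 1) with h | h
    · rw [hagree _ _ (by omega) (by omega)]
      exact st.diag p (by omega) x y
    · have : p = n + 1 := by omega
      subst this
      exact hdiagnew x y

noncomputable def chain (hind : Indiscompositive P) (hG : P ⟨Fin k, G⟩)
    (hk : Nonempty (Fin k)) : (n : ℕ) → CState P G n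
  | 0 => Classical.choice (cinit_ex hind.1 hG hk)
  | n + 1 => (cstep_ex hind hG hk n (chain hind hG hk n)).choose

lemma chain_agree (hind : Indiscompositive P) (hG : P ⟨Fin k, G⟩)
    (hk : Nonempty (Fin k)) (n : ℕ) :
    ∀ u v : ℕ × Fin k, u.1 ≤ n → v.1 ≤ n →
      ((chain hind hG hk (n + 1)).Z.Adj u v ↔ (chain hind hG hk n).Z.Adj u v) :=
  (cstep_ex hind hG hk n (chain hind hG hk n)).choose_spec

lemma chain_agree' (hind : Indiscompositive P) (hG : P ⟨Fin k, G⟩)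
    (hk : Nonempty (Fin k)) {m n : ℕ} (hmn : m ≤ n) :
    ∀ u v : ℕ × Fin k, u.1 ≤ m → v.1 ≤ m →
      ((chain hind hG hk n).Z.Adj u v ↔ (chain hind hG hk m).Z.Adj u v) := by
  induction n with
  | zero => intro u v hu hv; rw [Nat.le_zero.mp hmn]
  | succ n ih =>
    intro u v hu hv
    rcases Nat.eq_or_lt_of_le hmn with rfl | h'
    · rfl
    · have hm : m ≤ n := Nat.lt_succ_iff.mp h'
      rw [chain_agree hind hG hk n u v (by omega) (by omega)]
      exact ih hm u v hu hv

end Stmt11Aux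

/-- if `P` is indiscompositive and `G ∈ P` has vertices
`v₁, …, v_k`, then there is a countably infinite graph `X`, made of copies
`G¹, G², …` of `G` (the vertex `(i, x)` playing the role of `v_xⁱ`), which is
uniform for `G`: (i) each copy induces `G` via `v_xⁱ ↦ v_x`, and (ii) for all
`p < q`, `v_xᵖ ↦ v_x¹, v_x^q ↦ v_x²` is an isomorphism from the subgraph
induced on copies `p, q` to the one induced on copies `1, 2`; and every finite
(nonempty) induced subgraph of `X` belongs to `P`. -/
theorem statement_11 (P : GProp) (hP : IsGProp P) (hind : Indiscompositive P)
    (k : ℕ) (G : SimpleGraph (Fin k)) (hG : P ⟨Fin k, G⟩) :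
    ∃ X : SimpleGraph (ℕ × Fin k),
      (∀ (i : ℕ) (x y : Fin k), X.Adj (i, x) (i, y) ↔ G.Adj x y) ∧
      (∀ p q : ℕ, p < q → ∀ x y : Fin k,
        X.Adj (p, x) (q, y) ↔ X.Adj (0, x) (1, y)) ∧
      (∀ s : Finset (ℕ × Fin k), s.Nonempty →
        P ⟨↥(s : Set (ℕ × Fin k)), X.induce (s : Set (ℕ × Fin k))⟩) := by
  have hk : Nonempty (Fin k) := hP.vertexNonempty ⟨Fin k, G⟩ hG
  set ch := Stmt11Aux.chain hind hG hk with hch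
  let Zinf : SimpleGraph (ℕ × Fin k) :=
    { Adj := fun u v => (ch (max u.1 v.1)).Z.Adj u v
      symm := by
        constructor
        intro u v h
        show (ch (max v.1 u.1)).Z.Adj v u
        rw [max_comm v.1 u.1]
        exact (ch (max u.1 v.1)).Z.adj_symm h
      loopless := ⟨fun u h => (ch _).Z.irrefl h⟩ }
  have hlim : ∀ (n : ℕ) (u v : ℕ × Fin k), u.1 ≤ n → v.1 ≤ n →
      (Zinf.Adj u v ↔ (ch n).Z.Adj u v) := by
    intro n u v hu hv
    have h1 : Zinf.Adj u v ↔ (ch (max u.1 v.1)).Z.Adj u v := Iff.rfl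
    rw [h1]
    exact (Stmt11Aux.chain_agree' hind hG hk (max_le hu hv) u v
      (le_max_left _ _) (le_max_right _ _)).symm
  have hdiaginf : ∀ (p : ℕ) (x y : Fin k), Zinf.Adj (p, x) (p, y) ↔ G.Adj x y := by
    intro p x y
    rw [hlim p (p, x) (p, y) le_rfl le_rfl]
    exact (ch p).diag p le_rfl x y
  obtain ⟨c, t, ht, htc⟩ := Stmt11Aux.ramsey_pairs
    (fun p q => fun x y : Fin k => decide (Zinf.Adj (p, x) (q, y)))
  let X : SimpleGraph (ℕ × Fin k) :=
    { Adj := fun u v => (u.1 = v.1 ∧ G.Adj u.2 v.2) ∨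
        (u.1 < v.1 ∧ c u.2 v.2 = true) ∨ (v.1 < u.1 ∧ c v.2 u.2 = true)
      symm := by
        constructor
        rintro u v (⟨h1, h2⟩ | ⟨h1, h2⟩ | ⟨h1, h2⟩)
        · exact Or.inl ⟨h1.symm, h2.symm⟩
        · exact Or.inr (Or.inr ⟨h1, h2⟩)
        · exact Or.inr (Or.inl ⟨h1, h2⟩)
      loopless := by
        constructor
        rintro u (⟨h1, h2⟩ | ⟨h1, h2⟩ | ⟨h1, h2⟩)
        · exact G.irrefl h2
        · exact lt_irrefl _ h1
        · exact lt_irrefl _ h1 }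
  have hXadj : ∀ u v : ℕ × Fin k, X.Adj u v ↔ ((u.1 = v.1 ∧ G.Adj u.2 v.2) ∨
      (u.1 < v.1 ∧ c u.2 v.2 = true) ∨ (v.1 < u.1 ∧ c v.2 u.2 = true)) :=
    fun u v => Iff.rfl
  have hXdiag : ∀ (i : ℕ) (x y : Fin k), X.Adj (i, x) (i, y) ↔ G.Adj x y := by
    intro i x y
    rw [hXadj]
    constructor
    · rintro (⟨h1, h2⟩ | ⟨h1, h2⟩ | ⟨h1, h2⟩)
      · exact h2
      · exact absurd h1 (lt_irrefl i)
      · exact absurd h1 (lt_irrefl i)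
    · exact fun h => Or.inl ⟨rfl, h⟩
  have hXcross : ∀ p q : ℕ, p < q → ∀ x y : Fin k,
      (X.Adj (p, x) (q, y) ↔ c x y = true) := by
    intro p q hpq x y
    rw [hXadj]
    constructor
    · rintro (⟨h1, h2⟩ | ⟨h1, h2⟩ | ⟨h1, h2⟩)
      · exact absurd h1 (Nat.ne_of_lt hpq)
      · exact h2
      · exact absurd hpq (not_lt_of_gt h1)
    · exact fun h => Or.inr (Or.inl ⟨hpq, h⟩)
  have hXZ : ∀ (p q : ℕ) (x y : Fin k),
      Zinf.Adj (t p, x) (t q, y) ↔ X.Adj (p, x) (q, y) := by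
    intro p q x y
    rcases lt_trichotomy p q with h | h | h
    · have hc : c x y = decide (Zinf.Adj (t p, x) (t q, y)) :=
        (congrFun (congrFun (htc p q h) x) y).symm
      rw [hXcross p q h x y, hc, decide_eq_true_eq]
    · subst h
      rw [hdiaginf, hXdiag]
    · have hc : c y x = decide (Zinf.Adj (t q, y) (t p, x)) :=
        (congrFun (congrFun (htc q p h) y) x).symm
      rw [Zinf.adj_comm, X.adj_comm, hXcross q p h y x, hc, decide_eq_true_eq]
  refine ⟨X, hXdiag, ?_, ?_⟩
  · intro p q hpq x y
    rw [hXcross p q hpq x y, hXcross 0 1 Nat.one_pos x y]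
  · intro s hs
    set N := s.sup (fun u => t u.1) with hN
    have hsN : ∀ u ∈ s, t u.1 ≤ N := fun u hu => Finset.le_sup (f := fun u : ℕ × Fin k => t u.1) hu
    refine Stmt11Aux.hered hind.1 (ch N).mem ?_ ?_
    · refine ⟨⟨fun a => ⟨(t (a : ℕ × Fin k).1, (a : ℕ × Fin k).2),
        Stmt11Aux.mem_box.mpr
          (Nat.lt_succ_of_le (hsN _ (Finset.mem_coe.mp a.2)))⟩, ?_⟩, ?_⟩
      · intro a b hab
        simp only [Subtype.mk.injEq, Prod.mk.injEq] at hab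
        exact Subtype.ext (Prod.ext (ht.injective hab.1) hab.2)
      · intro a b
        simp only [comap_adj, Function.Embedding.coeFn_mk,
          Function.Embedding.coe_subtype]
        rw [← hlim N _ _ (hsN _ (Finset.mem_coe.mp a.2))
          (hsN _ (Finset.mem_coe.mp b.2))]
        exact hXZ (a : ℕ × Fin k).1 (b : ℕ × Fin k).1 (a : ℕ × Fin k).2 (b : ℕ × Fin k).2
    · obtain ⟨u0, hu0⟩ := hs
      exact ⟨⟨u0, Finset.mem_coe.mpr hu0⟩⟩
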